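/- Every ok Automath book remains ok after removal of a dead-end assumption line; consequently, the clean book cl(B) of an ok book B is ok. -/

import Mathlib

/-- Content of an Automath line: `---`, `PN`, or a term (abstractly a natural number). -/
inductive Content where
  | dash : Content
  | pn : Content
  | term : ℕ → Content
deriving DecidableEq

/-- An Automath line: indicator (`none` = ε), identifier, content, category. -/
structure Line where
  indicator : Option ℕ
  identifier : ℕ
  content : Content
  category : ℕ
deriving DecidableEq

abbrev Book := List Line

def Line.isAssum (l : Line) : Bool := l.content == Content.dash
def Line.isPrim (l : Line) : Bool := l.content == Content.pn
def Line.isDefin (l : Line) : Bool := match l.content with | .term _ => true | _ => false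

/-- Coherence: identifiers pairwise distinct, and each non-ε indicator is the
identifier of an earlier assumption line. -/
def Coherent (B : Book) : Prop :=
  (B.map Line.identifier).Nodup ∧
  ∀ m : ℕ, ∀ L : Line, B[m]? = some L → ∀ y : ℕ, L.indicator = some y →
    ∃ l : ℕ, l < m ∧ ∃ L' : Line, B[l]? = some L' ∧ L'.identifier = y ∧ L'.isAssum

/-- Index of the assumption line introducing identifier `y`. -/
def introIdx (B : Book) (y : ℕ) : Option ℕ :=
  B.findIdx? (fun l => l.identifier == y && l.isAssum)

/-- Fuel-based computation of the subject-list γ of the line at index `i`. -/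
def gammaAux (B : Book) : ℕ → ℕ → List ℕ
  | 0, i =>
    match B[i]? with
    | none => []
    | some l => [l.identifier]
  | fuel+1, i =>
    match B[i]? with
    | none => []
    | some l =>
      match l.indicator with
      | none => [l.identifier]
      | some y =>
        match introIdx B y with
        | none => [l.identifier]
        | some j => gammaAux B fuel j ++ [l.identifier]

/-- Subject-list γ_z of variable `z` (introduced by an assumption line). γ_ε = []. -/
def gammaOf (B : Book) (z : ℕ) : List ℕ :=
  match introIdx B z with
  | none => []
  | some i => gammaAux B i i

/-- Fuel-based computation of the typing-context Γ of the line at index `i`. -/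
def ctxAux (B : Book) : ℕ → ℕ → List (ℕ × ℕ)
  | 0, i =>
    match B[i]? with
    | none => []
    | some l => [(l.identifier, l.category)]
  | fuel+1, i =>
    match B[i]? with
    | none => []
    | some l =>
      match l.indicator with
      | none => [(l.identifier, l.category)]
      | some y =>
        match introIdx B y with
        | none => [(l.identifier, l.category)]
        | some j => ctxAux B fuel j ++ [(l.identifier, l.category)]

/-- Typing-context Γ_z of variable `z`. Γ_ε = ∅. -/
def ctxOf (B : Book) (z : ℕ) : List (ℕ × ℕ) :=
  match introIdx B z with
  | none => []
  | some i => ctxAux B i i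

/-- Subject-list of an indicator (γ_ε = [] for the empty indicator). -/
def gammaInd (B : Book) : Option ℕ → List ℕ
  | none => []
  | some y => gammaOf B y

/-- Typing-context of an indicator. -/
def ctxInd (B : Book) : Option ℕ → List (ℕ × ℕ)
  | none => []
  | some y => ctxOf B y

/-- y ≺ z : some line of `B` has indicator `y` (≠ ε) and identifier `z`. -/
def Prec (B : Book) (y z : ℕ) : Prop :=
  ∃ L ∈ B, L.indicator = some y ∧ L.identifier = z

/-- The line at index `i` is a dead-end assumption line. -/
def DeadEnd (B : Book) (i : ℕ) : Prop :=
  ∃ L : Line, B[i]? = some L ∧ L.isAssum ∧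
    ∀ j : ℕ, i < j → ∀ L' : Line, B[j]? = some L' → L'.indicator ≠ some L.identifier

/-- One removal step: delete a single dead-end assumption line. -/
def Step (B B' : Book) : Prop := ∃ i : ℕ, DeadEnd B i ∧ B' = B.eraseIdx i

/-- A clean book: coherent with no dead-end assumption lines. -/
def IsClean (B : Book) : Prop := Coherent B ∧ ∀ i : ℕ, ¬ DeadEnd B i

/-- An entry of the λD-environment Δ_B. -/
structure Entry where
  ctx : List (ℕ × ℕ)
  const : ℕ
  args : List ℕ
  content : Content
  category : ℕ

def Fresh (B : Book) (x : ℕ) : Prop := ∀ L ∈ B, L.identifier ≠ x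

def IndOk (B : Book) : Option ℕ → Prop
  | none => True
  | some z => ∃ L ∈ B, L.identifier = z ∧ L.isAssum

/-- Well-formed (ok) books with their translation Δ_B, relative to abstract
typing judgements `J Δ Γ M A` (Δ; Γ ⊢ M : A) and `S Δ Γ A` (Δ; Γ ⊢ A : s). -/
inductive Ok (J : List Entry → List (ℕ × ℕ) → ℕ → ℕ → Prop)
    (S : List Entry → List (ℕ × ℕ) → ℕ → Prop) : Book → List Entry → Prop
  | nil : Ok J S [] []
  | assum {B : Book} {Δ : List Entry} {ind : Option ℕ} {x A : ℕ} :
      Ok J S B Δ → Fresh B x → IndOk B ind → S Δ (ctxInd B ind) A →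
      Ok J S (B ++ [⟨ind, x, Content.dash, A⟩]) Δ
  | defin {B : Book} {Δ : List Entry} {ind : Option ℕ} {c M A : ℕ} :
      Ok J S B Δ → Fresh B c → IndOk B ind → J Δ (ctxInd B ind) M A →
      Ok J S (B ++ [⟨ind, c, Content.term M, A⟩])
        (Δ ++ [⟨ctxInd B ind, c, gammaInd B ind, Content.term M, A⟩])
  | prim {B : Book} {Δ : List Entry} {ind : Option ℕ} {c A : ℕ} :
      Ok J S B Δ → Fresh B c → IndOk B ind → S Δ (ctxInd B ind) A →
      Ok J S (B ++ [⟨ind, c, Content.pn, A⟩])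
        (Δ ++ [⟨ctxInd B ind, c, gammaInd B ind, Content.pn, A⟩])

/-! ### Auxiliary lemmas -/

lemma mem_of_getElem?' {B : Book} {k : ℕ} {L : Line} (h : B[k]? = some L) : L ∈ B := by
  obtain ⟨h1, h2⟩ := List.getElem?_eq_some_iff.mp h
  exact h2 ▸ List.getElem_mem h1

/-- The index map induced by erasing index `i`. -/
lemma getElem?_eraseIdx_adj (B : Book) (i k : ℕ) (hk : k ≠ i) :
    (B.eraseIdx i)[(if k < i then k else k - 1)]? = B[k]? := by
  rcases Nat.lt_or_ge k i with h | h
  · rw [if_pos h, List.getElem?_eraseIdx, if_pos h]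
  · rw [if_neg (by omega), List.getElem?_eraseIdx, if_neg (by omega)]
    congr 1; omega

/-- `findIdx?` characterisation using `getElem?`. -/
lemma findIdx?_some_iff' {α : Type*} (p : α → Bool) (l : List α) (i : ℕ) :
    l.findIdx? p = some i ↔
      (∃ a, l[i]? = some a ∧ p a = true) ∧
        ∀ j < i, ∀ a, l[j]? = some a → p a = false := by
  rw [List.findIdx?_eq_some_iff_getElem]
  constructor
  · rintro ⟨h, hp, hmin⟩
    refine ⟨⟨l[i], List.getElem?_eq_getElem h, hp⟩, ?_⟩
    intro j hj a ha
    obtain ⟨hjl, rfl⟩ := List.getElem?_eq_some_iff.mp ha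
    simpa using hmin j hj
  · rintro ⟨⟨a, ha, hp⟩, hmin⟩
    obtain ⟨hil, rfl⟩ := List.getElem?_eq_some_iff.mp ha
    refine ⟨hil, hp, ?_⟩
    intro j hj
    simpa using hmin j hj l[j] (List.getElem?_eq_getElem (by omega))

lemma introIdx_some {B : Book} {y j : ℕ} (h : introIdx B y = some j) :
    ∃ L, B[j]? = some L ∧ L.identifier = y ∧ L.isAssum := by
  rw [introIdx, findIdx?_some_iff'] at h
  obtain ⟨⟨a, ha, hp⟩, -⟩ := h
  simp only [Bool.and_eq_true, beq_iff_eq] at hp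
  exact ⟨a, ha, hp.1, hp.2⟩

lemma identifier_inj {B : Book} (hN : (B.map Line.identifier).Nodup)
    {j m : ℕ} {a b : Line} (h1 : B[j]? = some a) (h2 : B[m]? = some b)
    (h : a.identifier = b.identifier) : j = m := by
  have hj : (B.map Line.identifier)[j]? = some a.identifier := by
    rw [List.getElem?_map, h1]; rfl
  have hm : (B.map Line.identifier)[m]? = some b.identifier := by
    rw [List.getElem?_map, h2]; rfl
  have hjl : j < (B.map Line.identifier).length := by
    rw [List.length_map]; exact (List.getElem?_eq_some_iff.mp h1).1
  exact (List.getElem?_inj hjl hN).mp (by rw [hj, hm, h])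

lemma introIdx_lt {B : Book} (hC : Coherent B) {k : ℕ} {l : Line} {y j : ℕ}
    (hBk : B[k]? = some l) (hind : l.indicator = some y)
    (hI : introIdx B y = some j) : j < k := by
  obtain ⟨m, hmk, L', hBm, hid, hAs⟩ := hC.2 k l hBk y hind
  obtain ⟨a, ha, hay, _⟩ := introIdx_some hI
  have : j = m := identifier_inj hC.1 ha hBm (by rw [hay, hid])
  omega

lemma introIdx_exists {B : Book} {z : ℕ}
    (h : ∃ L ∈ B, L.identifier = z ∧ L.isAssum) :
    ∃ k, introIdx B z = some k := by
  cases hI : introIdx B z with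
  | some k => exact ⟨k, rfl⟩
  | none =>
    rw [introIdx, List.findIdx?_eq_none_iff] at hI
    obtain ⟨L, hL, hid, hAs⟩ := h
    have := hI L hL
    simp [hid, hAs] at this

section Erase

variable {B : Book} {i : ℕ} {L : Line}

lemma introIdx_erase_none (hiL : B[i]? = some L) {y : ℕ}
    (h : introIdx B y = none) : introIdx (B.eraseIdx i) y = none := by
  rw [introIdx, List.findIdx?_eq_none_iff] at h ⊢
  exact fun a ha => h a ((B.eraseIdx_sublist i).subset ha)

lemma introIdx_erase_some (hiL : B[i]? = some L) {y j : ℕ}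
    (hy : y ≠ L.identifier) (h : introIdx B y = some j) :
    j ≠ i ∧ introIdx (B.eraseIdx i) y = some (if j < i then j else j - 1) := by
  rw [introIdx, findIdx?_some_iff'] at h
  obtain ⟨⟨a, ha, hp⟩, hmin⟩ := h
  simp only [Bool.and_eq_true, beq_iff_eq] at hp
  have hji : j ≠ i := by
    rintro rfl
    rw [hiL] at ha
    cases ha
    exact hy hp.1.symm
  refine ⟨hji, ?_⟩
  rw [introIdx, findIdx?_some_iff']
  constructor
  · exact ⟨a, by rw [getElem?_eraseIdx_adj B i j hji, ha], by simp [hp.1, hp.2]⟩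
  · intro m hm b hb
    rw [List.getElem?_eraseIdx] at hb
    split at hb
    · exact hmin m (by split at hm <;> omega) b hb
    · refine hmin (m + 1) ?_ b hb
      rename_i hmi
      rcases Nat.lt_or_ge j i with h' | h'
      · rw [if_pos h'] at hm; omega
      · rw [if_neg (by omega)] at hm; omega

variable (hiL : B[i]? = some L)
variable (HInd : ∀ L' ∈ B, L'.indicator ≠ some L.identifier)

include hiL HInd in
lemma ctxAux_erase : ∀ f k, k ≠ i →
    ctxAux (B.eraseIdx i) f (if k < i then k else k - 1) = ctxAux B f k := by
  intro f
  induction f with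
  | zero =>
    intro k hk
    simp only [ctxAux, getElem?_eraseIdx_adj B i k hk]
  | succ f ih =>
    intro k hk
    simp only [ctxAux, getElem?_eraseIdx_adj B i k hk]
    cases hBk : B[k]? with
    | none => rfl
    | some l =>
      cases hind : l.indicator with
      | none => simp only [hind]
      | some y =>
        have hyx : y ≠ L.identifier := by
          intro h
          exact HInd l (mem_of_getElem?' hBk) (by rw [hind, h])
        cases hI : introIdx B y with
        | none => simp only [hind, hI, introIdx_erase_none hiL hI]
        | some j =>
          obtain ⟨hji, hI'⟩ := introIdx_erase_some hiL hyx hI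
          simp only [hind, hI, hI', ih j hji]

include hiL HInd in
lemma coherent_eraseIdx (hC : Coherent B) : Coherent (B.eraseIdx i) := by
  constructor
  · exact hC.1.sublist ((B.eraseIdx_sublist i).map _)
  · intro m L' hm y hy
    rw [List.getElem?_eraseIdx] at hm
    have key : ∀ m' : ℕ, B[m']? = some L' →
        ((m < i ∧ m' = m) ∨ (i ≤ m ∧ m' = m + 1)) →
        ∃ l < m, ∃ L'' : Line, (B.eraseIdx i)[l]? = some L'' ∧
          L''.identifier = y ∧ L''.isAssum := by
      intro m' hm' hcase
      obtain ⟨l, hl, L'', hBl, hid, hAs⟩ := hC.2 m' L' hm' y hy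
      have hyx : y ≠ L.identifier := by
        intro h
        exact HInd L' (mem_of_getElem?' hm') (by rw [hy, h])
      have hli : l ≠ i := by
        rintro rfl
        rw [hiL] at hBl
        cases hBl
        exact hyx hid.symm
      refine ⟨if l < i then l else l - 1, by split <;> omega, L'', ?_, hid, hAs⟩
      rw [getElem?_eraseIdx_adj B i l hli, hBl]
    split at hm
    · exact key m hm (Or.inl ⟨by omega, rfl⟩)
    · exact key (m + 1) hm (Or.inr ⟨by omega, rfl⟩)

end Erase

/-- Fuel irrelevance for `ctxAux` in a coherent book. -/
lemma ctxAux_fuel {B : Book} (hC : Coherent B) :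
    ∀ k, ∀ f, k ≤ f → ctxAux B f k = ctxAux B k k := by
  intro k
  induction k using Nat.strong_induction_on with
  | _ k ih =>
    intro f hf
    match k, hf with
    | 0, _ =>
      cases f with
      | zero => rfl
      | succ f' =>
        simp only [ctxAux]
        cases hB0 : B[0]? with
        | none => rfl
        | some l =>
          cases hind : l.indicator with
          | none => simp only [hind]
          | some y =>
            obtain ⟨m, hm, -⟩ := hC.2 0 l hB0 y hind
            omega
    | (k'' + 1 : ℕ), _ =>
      cases f with
      | zero => omega
      | succ f' =>
        simp only [ctxAux]
        cases hBk : B[k'' + 1]? with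
        | none => rfl
        | some l =>
          cases hind : l.indicator with
          | none => simp only [hind]
          | some y =>
            cases hI : introIdx B y with
            | none => simp only [hind, hI]
            | some j =>
              have hjk : j < k'' + 1 := introIdx_lt hC hBk hind hI
              simp only [hind, hI, ih j hjk f' (by omega), ih j hjk k'' (by omega)]

section Erase2

variable {B : Book} {i : ℕ} {L : Line}
variable (hiL : B[i]? = some L)
variable (HInd : ∀ L' ∈ B, L'.indicator ≠ some L.identifier)

include hiL HInd in
lemma ctxOf_erase (hC : Coherent B) {z : ℕ} (hz : z ≠ L.identifier) :
    ctxOf (B.eraseIdx i) z = ctxOf B z := by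
  rw [ctxOf, ctxOf]
  cases hI : introIdx B z with
  | none => rw [introIdx_erase_none hiL hI]
  | some k =>
    obtain ⟨hki, hI'⟩ := introIdx_erase_some hiL hz hI
    rw [hI']
    have hC' : Coherent (B.eraseIdx i) := coherent_eraseIdx hiL HInd hC
    calc ctxAux (B.eraseIdx i) (if k < i then k else k - 1)
          (if k < i then k else k - 1)
        = ctxAux (B.eraseIdx i) k (if k < i then k else k - 1) :=
          (ctxAux_fuel hC' _ k (by split <;> omega)).symm
      _ = ctxAux B k k := ctxAux_erase hiL HInd k k hki

lemma gammaAux_eq_map (B : Book) : ∀ f k, gammaAux B f k = (ctxAux B f k).map Prod.fst := by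
  intro f
  induction f with
  | zero =>
    intro k
    simp only [gammaAux, ctxAux]
    cases B[k]? <;> simp
  | succ f ih =>
    intro k
    simp only [gammaAux, ctxAux]
    cases B[k]? with
    | none => simp
    | some l =>
      cases hind : l.indicator with
      | none => simp [hind]
      | some y =>
        cases hI : introIdx B y with
        | none => simp [hind, hI]
        | some j => simp [hind, hI, ih j]

lemma gammaOf_eq_map (B : Book) (z : ℕ) : gammaOf B z = (ctxOf B z).map Prod.fst := by
  rw [gammaOf, ctxOf]
  cases introIdx B z with
  | none => rfl
  | some k => exact gammaAux_eq_map B k k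

include hiL HInd in
lemma gammaOf_erase (hC : Coherent B) {z : ℕ} (hz : z ≠ L.identifier) :
    gammaOf (B.eraseIdx i) z = gammaOf B z := by
  rw [gammaOf_eq_map, gammaOf_eq_map, ctxOf_erase hiL HInd hC hz]

include hiL HInd in
lemma ctxInd_erase (hC : Coherent B) {ind : Option ℕ}
    (hz : ∀ z, ind = some z → z ≠ L.identifier) :
    ctxInd (B.eraseIdx i) ind = ctxInd B ind := by
  cases ind with
  | none => rfl
  | some z => exact ctxOf_erase hiL HInd hC (hz z rfl)

include hiL HInd in
lemma gammaInd_erase (hC : Coherent B) {ind : Option ℕ}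
    (hz : ∀ z, ind = some z → z ≠ L.identifier) :
    gammaInd (B.eraseIdx i) ind = gammaInd B ind := by
  cases ind with
  | none => rfl
  | some z => exact gammaOf_erase hiL HInd hC (hz z rfl)

lemma fresh_eraseIdx {x : ℕ} (h : Fresh B x) : Fresh (B.eraseIdx i) x :=
  fun L' hL' => h L' ((B.eraseIdx_sublist i).subset hL')

include hiL in
lemma mem_eraseIdx_of_ne {L' : Line} (hL' : L' ∈ B) (hne : L' ≠ L) :
    L' ∈ B.eraseIdx i := by
  obtain ⟨j, hj⟩ := List.mem_iff_getElem?.mp hL'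
  have hji : j ≠ i := by
    rintro rfl
    rw [hiL] at hj
    exact hne (Option.some_inj.mp hj).symm
  exact mem_of_getElem?' (k := if j < i then j else j - 1)
    (by rw [getElem?_eraseIdx_adj B i j hji, hj])

include hiL in
lemma indOk_eraseIdx {ind : Option ℕ}
    (hz : ∀ z, ind = some z → z ≠ L.identifier) (h : IndOk B ind) :
    IndOk (B.eraseIdx i) ind := by
  cases ind with
  | none => trivial
  | some z =>
    obtain ⟨L', hL', hid, hAs⟩ := h
    refine ⟨L', mem_eraseIdx_of_ne hiL hL' ?_, hid, hAs⟩
    rintro rfl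
    exact hz z rfl hid.symm

end Erase2

/-- Coherence is preserved when appending a fresh line with a good indicator. -/
lemma coherent_snoc {B : Book} {ind : Option ℕ} {x : ℕ} {c : Content} {A : ℕ}
    (hC : Coherent B) (hF : Fresh B x) (hI : IndOk B ind) :
    Coherent (B ++ [⟨ind, x, c, A⟩]) := by
  constructor
  · rw [List.map_append, List.nodup_append]
    refine ⟨hC.1, by simp, ?_⟩
    intro a ha b hb
    simp only [List.map_cons, List.map_nil, List.mem_singleton] at hb
    subst hb
    obtain ⟨L', hL', hid⟩ := List.mem_map.mp ha
    exact fun h' => hF L' hL' (hid.trans h')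
  · intro m L hm y hy
    rcases Nat.lt_or_ge m B.length with h | h
    · rw [List.getElem?_append, if_pos h] at hm
      obtain ⟨l, hl, L', hBl, hid, hAs⟩ := hC.2 m L hm y hy
      refine ⟨l, hl, L', ?_, hid, hAs⟩
      rw [List.getElem?_append, if_pos (by omega)]
      exact hBl
    · rw [List.getElem?_append_right h] at hm
      have hm0 : m - B.length = 0 ∧ L = ⟨ind, x, c, A⟩ := by
        cases hmb : m - B.length with
        | zero => rw [hmb] at hm; exact ⟨rfl, (Option.some_inj.mp hm).symm⟩
        | succ n => rw [hmb] at hm; simp at hm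
      obtain ⟨hm0, rfl⟩ := hm0
      simp only at hy
      obtain ⟨L', hL', hid, hAs⟩ : IndOk B (some y) := hy ▸ hI
      obtain ⟨l, hl⟩ := List.mem_iff_getElem?.mp hL'
      have hlB : l < B.length := (List.getElem?_eq_some_iff.mp hl).1
      refine ⟨l, by omega, L', ?_, hid, hAs⟩
      rw [List.getElem?_append, if_pos hlB]
      exact hl

lemma ok_coherent {J : List Entry → List (ℕ × ℕ) → ℕ → ℕ → Prop}
    {S : List Entry → List (ℕ × ℕ) → ℕ → Prop} {B : Book} {Δ : List Entry}
    (h : Ok J S B Δ) : Coherent B := by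
  induction h with
  | nil => exact ⟨List.nodup_nil, fun m L hm => by simp at hm⟩
  | assum _ hF hIO _ ih => exact coherent_snoc ih hF hIO
  | defin _ hF hIO _ ih => exact coherent_snoc ih hF hIO
  | prim _ hF hIO _ ih => exact coherent_snoc ih hF hIO

/-- In an ok book, the identifier of a dead-end line is used by no indicator at all. -/
lemma deadEnd_noInd {J : List Entry → List (ℕ × ℕ) → ℕ → ℕ → Prop}
    {S : List Entry → List (ℕ × ℕ) → ℕ → Prop} {B : Book} {Δ : List Entry}
    (h : Ok J S B Δ) {i : ℕ} {L : Line} (hiL : B[i]? = some L)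
    (hlater : ∀ j, i < j → ∀ L', B[j]? = some L' → L'.indicator ≠ some L.identifier) :
    ∀ L' ∈ B, L'.indicator ≠ some L.identifier := by
  have hC := ok_coherent h
  intro L' hL' hind
  obtain ⟨j, hj⟩ := List.mem_iff_getElem?.mp hL'
  rcases Nat.lt_or_ge i j with hij | hij
  · exact hlater j hij L' hj hind
  · obtain ⟨l, hl, L'', hBl, hid, -⟩ := hC.2 j L' hj _ hind
    have : l = i := identifier_inj hC.1 hBl hiL (by rw [hid])
    omega

lemma ok_erase {J : List Entry → List (ℕ × ℕ) → ℕ → ℕ → Prop}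
    {S : List Entry → List (ℕ × ℕ) → ℕ → Prop} {B : Book} {Δ : List Entry}
    (h : Ok J S B Δ) :
    ∀ (i : ℕ) (L : Line), B[i]? = some L → L.isAssum →
      (∀ L' ∈ B, L'.indicator ≠ some L.identifier) →
      Ok J S (B.eraseIdx i) Δ := by
  induction h with
  | nil => intro i L hiL; simp at hiL
  | @assum B₀ Δ₀ ind x A hOk hF hIO hS ih =>
    intro i L hiL hAs HInd
    rcases Nat.lt_or_ge i B₀.length with h | h
    · rw [List.getElem?_append, if_pos h] at hiL
      have HInd₀ : ∀ L' ∈ B₀, L'.indicator ≠ some L.identifier :=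
        fun L' hL' => HInd L' (List.mem_append_left _ hL')
      have hzne : ∀ z, ind = some z → z ≠ L.identifier := by
        intro z hz hz2
        exact HInd ⟨ind, x, Content.dash, A⟩
          (List.mem_append_right _ (List.mem_singleton_self _)) (by rw [show (⟨ind, x, Content.dash, A⟩ : Line).indicator = ind from rfl, hz, hz2])
      have hC₀ := ok_coherent hOk
      rw [List.eraseIdx_append_of_lt_length h]
      exact Ok.assum (ih i L hiL hAs HInd₀) (fresh_eraseIdx hF)
        (indOk_eraseIdx hiL hzne hIO)
        (by rw [ctxInd_erase hiL HInd₀ hC₀ hzne]; exact hS)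
    · rw [List.getElem?_append_right h] at hiL
      have h0 : i - B₀.length = 0 := by
        cases hmb : i - B₀.length with
        | zero => rfl
        | succ n => rw [hmb] at hiL; simp at hiL
      rw [List.eraseIdx_append_of_length_le h, h0]
      simpa using hOk
  | @defin B₀ Δ₀ ind c M A hOk hF hIO hJ ih =>
    intro i L hiL hAs HInd
    rcases Nat.lt_or_ge i B₀.length with h | h
    · rw [List.getElem?_append, if_pos h] at hiL
      have HInd₀ : ∀ L' ∈ B₀, L'.indicator ≠ some L.identifier :=
        fun L' hL' => HInd L' (List.mem_append_left _ hL')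
      have hzne : ∀ z, ind = some z → z ≠ L.identifier := by
        intro z hz hz2
        exact HInd ⟨ind, c, Content.term M, A⟩
          (List.mem_append_right _ (List.mem_singleton_self _)) (by rw [show (⟨ind, c, Content.term M, A⟩ : Line).indicator = ind from rfl, hz, hz2])
      have hC₀ := ok_coherent hOk
      rw [List.eraseIdx_append_of_lt_length h]
      rw [← ctxInd_erase hiL HInd₀ hC₀ hzne, ← gammaInd_erase hiL HInd₀ hC₀ hzne]
      exact Ok.defin (ih i L hiL hAs HInd₀) (fresh_eraseIdx hF)
        (indOk_eraseIdx hiL hzne hIO)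
        (by rw [ctxInd_erase hiL HInd₀ hC₀ hzne]; exact hJ)
    · rw [List.getElem?_append_right h] at hiL
      have h0 : i - B₀.length = 0 := by
        cases hmb : i - B₀.length with
        | zero => rfl
        | succ n => rw [hmb] at hiL; simp at hiL
      rw [h0, List.getElem?_cons_zero] at hiL
      cases hiL
      simp [Line.isAssum] at hAs
  | @prim B₀ Δ₀ ind c A hOk hF hIO hS ih =>
    intro i L hiL hAs HInd
    rcases Nat.lt_or_ge i B₀.length with h | h
    · rw [List.getElem?_append, if_pos h] at hiL
      have HInd₀ : ∀ L' ∈ B₀, L'.indicator ≠ some L.identifier :=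
        fun L' hL' => HInd L' (List.mem_append_left _ hL')
      have hzne : ∀ z, ind = some z → z ≠ L.identifier := by
        intro z hz hz2
        exact HInd ⟨ind, c, Content.pn, A⟩
          (List.mem_append_right _ (List.mem_singleton_self _)) (by rw [show (⟨ind, c, Content.pn, A⟩ : Line).indicator = ind from rfl, hz, hz2])
      have hC₀ := ok_coherent hOk
      rw [List.eraseIdx_append_of_lt_length h]
      rw [← ctxInd_erase hiL HInd₀ hC₀ hzne, ← gammaInd_erase hiL HInd₀ hC₀ hzne]
      exact Ok.prim (ih i L hiL hAs HInd₀) (fresh_eraseIdx hF)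
        (indOk_eraseIdx hiL hzne hIO)
        (by rw [ctxInd_erase hiL HInd₀ hC₀ hzne]; exact hS)
    · rw [List.getElem?_append_right h] at hiL
      have h0 : i - B₀.length = 0 := by
        cases hmb : i - B₀.length with
        | zero => rfl
        | succ n => rw [hmb] at hiL; simp at hiL
      rw [h0, List.getElem?_cons_zero] at hiL
      cases hiL
      simp [Line.isAssum] at hAs

lemma ok_deadEnd_erase {J : List Entry → List (ℕ × ℕ) → ℕ → ℕ → Prop}
    {S : List Entry → List (ℕ × ℕ) → ℕ → Prop} {B : Book} {Δ : List Entry}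
    (h : Ok J S B Δ) {i : ℕ} (hDE : DeadEnd B i) : Ok J S (B.eraseIdx i) Δ := by
  obtain ⟨L, hiL, hAs, hlater⟩ := hDE
  exact ok_erase h i L hiL hAs
    (deadEnd_noInd h hiL (fun j hj L' hj' => hlater j hj L' hj'))

/-- an ok book remains ok after removal of a dead-end assumption line;
consequently every book obtained by repeatedly removing dead-ends (in particular
the clean book cl(B)) is ok, with the same Δ. -/
theorem stmt11 (J : List Entry → List (ℕ × ℕ) → ℕ → ℕ → Prop)
    (S : List Entry → List (ℕ × ℕ) → ℕ → Prop)
    (B : Book) (Δ : List Entry) (h : Ok J S B Δ) :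
    (∀ i : ℕ, DeadEnd B i → Ok J S (B.eraseIdx i) Δ) ∧
    (∀ C : Book, Relation.ReflTransGen Step B C → Ok J S C Δ) := by
  refine ⟨fun i hDE => ok_deadEnd_erase h hDE, fun C hC => ?_⟩
  induction hC with
  | refl => exact h
  | tail _ hstep ih =>
    obtain ⟨i, hDE, rfl⟩ := hstep
    exact ok_deadEnd_erase ih hDE
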